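/- Let T : X ⇉ X be union nonexpansive with representation T(x) = {T_i(x) : i ∈ φ(x)}, and let x* be a strong fixed point (T(x*) = {x*}). Let r := r(x*;T) be the radius of attraction. Then r > 0 and for all x in the open ball of radius r around x* and all y ∈ T(x), ‖y − x*‖ ≤ ‖x − x*‖. Furthermore, for λ ∈ (0,1] and y ∈ (1−λ)x + λT(x), it holds ‖y−x*‖² + ((1−λ)/λ)‖x−y‖² ≤ ‖x−x*‖². -/

import Mathlib

open Filter Topology ENNReal

/-- Outer semicontinuity of an index-valued map `φ : X ⇉ I` (finite discrete `I`). -/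
def OSCIdx {X I : Type*} [TopologicalSpace X] (φ : X → Set I) : Prop :=
  ∀ (x : X) (i : I) (xn : ℕ → X),
    Tendsto xn atTop (nhds x) → (∀ n, i ∈ φ (xn n)) → i ∈ φ x

/-- `S : X → X` is nonexpansive. -/
def Nonexpansive {X : Type*} [NormedAddCommGroup X] (S : X → X) : Prop :=
  ∀ x y : X, ‖S x - S y‖ ≤ ‖x - y‖

/-- The radius of attraction `r(x*;T) = sup{δ > 0 : φ(x) ⊆ φ(x*) ∀ x ∈ B(x*;δ)}`,
as an element of `(0,+∞]` (modeled in `ℝ≥0∞`, with the closed ball described by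
`edist x x* ≤ δ`). -/
noncomputable def attractRadius {X I : Type*} [PseudoEMetricSpace X]
    (φ : X → Set I) (xs : X) : ℝ≥0∞ :=
  sSup {δ : ℝ≥0∞ | 0 < δ ∧ ∀ x : X, edist x xs ≤ δ → φ x ⊆ φ xs}

/-- Radius of attraction at strong fixed points: if `T` is union nonexpansive with
`T(x*) = {x*}`, then `r := r(x*;T) > 0`; for all `x` in the open ball of radius `r`
about `x*` and all `y ∈ T(x)`, `‖y−x*‖ ≤ ‖x−x*‖`; and for `λ ∈ (0,1]` and
`y ∈ (1−λ)x + λT(x)` one has `‖y−x*‖² + ((1−λ)/λ)‖x−y‖² ≤ ‖x−x*‖²`. -/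
theorem stmt_10 {X I : Type*}
    [NormedAddCommGroup X] [InnerProductSpace ℝ X] [FiniteDimensional ℝ X]
    [Fintype I] [Nonempty I]
    (Ts : I → X → X) (hTs : ∀ i, Nonexpansive (Ts i))
    (φ : X → Set I) (hφ : OSCIdx φ) (hne : ∀ x, (φ x).Nonempty)
    (T : X → Set X) (hT : ∀ x, T x = {y | ∃ i ∈ φ x, y = Ts i x})
    (xs : X) (hxs : T xs = {xs}) :
    0 < attractRadius φ xs ∧
    (∀ x : X, edist x xs < attractRadius φ xs → ∀ y ∈ T x, ‖y - xs‖ ≤ ‖x - xs‖) ∧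
    (∀ lam : ℝ, 0 < lam → lam ≤ 1 →
      ∀ x : X, edist x xs < attractRadius φ xs → ∀ z ∈ T x,
        ‖((1 - lam) • x + lam • z) - xs‖ ^ 2 +
            (1 - lam) / lam * ‖x - ((1 - lam) • x + lam • z)‖ ^ 2
          ≤ ‖x - xs‖ ^ 2) := by
  unfold attractRadius
  unfold OSCIdx at hφ
  unfold Nonexpansive at hTs
  set S := {δ : ℝ≥0∞ | 0 < δ ∧ ∀ x : X, edist x xs ≤ δ → φ x ⊆ φ xs} with hS
  -- fixed point property
  have hfix : ∀ i ∈ φ xs, Ts i xs = xs := by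
    intro i hi
    have : Ts i xs ∈ T xs := by rw [hT]; exact ⟨i, hi, rfl⟩
    rw [hxs] at this; exact this
  -- Part 1
  have hclosed : ∀ i : I, IsClosed {x : X | i ∈ φ x} := by
    intro i
    have : IsSeqClosed {x : X | i ∈ φ x} := fun xn x hxn hx => hφ x i xn hx hxn
    exact this.isClosed
  have hU : IsOpen {x : X | φ x ⊆ φ xs} := by
    have : {x : X | φ x ⊆ φ xs} = ⋂ i : I, {x : X | i ∈ φ x → i ∈ φ xs} := by
      ext x; simp [Set.subset_def]
    rw [this]
    apply isOpen_iInter_of_finite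
    intro i
    by_cases hi : i ∈ φ xs
    · simp [hi]
    · have : {x : X | i ∈ φ x → i ∈ φ xs} = {x : X | i ∈ φ x}ᶜ := by
        ext x; simp [hi]
      rw [this]; exact (hclosed i).isOpen_compl
  have hmem : ∃ δ ∈ S, (0:ℝ≥0∞) < δ := by
    obtain ⟨ε, hε, hball⟩ := EMetric.isOpen_iff.mp hU xs (by simp : φ xs ⊆ φ xs)
    refine ⟨min (ε/2) 1, ⟨?_, ?_⟩, ?_⟩
    · simp [hε.ne', ENNReal.div_eq_zero_iff]
    · intro x hx
      have hlt : min (ε/2) 1 < ε := by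
        rcases eq_or_ne ε ⊤ with h | h
        · exact lt_of_le_of_lt (min_le_right _ _) (by simp [h])
        · exact lt_of_le_of_lt (min_le_left _ _) (ENNReal.half_lt_self hε.ne' h)
      exact hball (lt_of_le_of_lt hx hlt)
    · simp [hε.ne', ENNReal.div_eq_zero_iff]
  obtain ⟨δ₀, hδ₀S, hδ₀pos⟩ := hmem
  have h1 : 0 < sSup S := lt_of_lt_of_le hδ₀pos (le_sSup hδ₀S)
  -- subset extraction
  have hsub : ∀ x : X, edist x xs < sSup S → φ x ⊆ φ xs := by
    intro x hx
    obtain ⟨δ, hδS, hδ⟩ := lt_sSup_iff.mp hx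
    exact hδS.2 x hδ.le
  have h2 : ∀ x : X, edist x xs < sSup S → ∀ y ∈ T x, ‖y - xs‖ ≤ ‖x - xs‖ := by
    intro x hx y hy
    rw [hT] at hy
    obtain ⟨i, hi, rfl⟩ := hy
    have := hTs i x xs
    rwa [hfix i (hsub x hx hi)] at this
  refine ⟨h1, h2, ?_⟩
  intro lam hl hl1 x hx z hz
  have hb : ‖z - xs‖ ≤ ‖x - xs‖ := h2 x hx z hz
  set a := x - xs
  set b := z - xs
  have hy : ((1 - lam) • x + lam • z) - xs = (1 - lam) • a + lam • b := by
    simp only [a, b, smul_sub]; module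
  have hxy : x - ((1 - lam) • x + lam • z) = lam • (a - b) := by
    simp only [a, b, smul_sub]; module
  rw [hy, hxy]
  have h1' : ‖(1 - lam) • a + lam • b‖ ^ 2 =
      (1 - lam) ^ 2 * ‖a‖ ^ 2 + 2 * ((1 - lam) * lam) * inner ℝ a b + lam ^ 2 * ‖b‖ ^ 2 := by
    rw [norm_add_sq_real, norm_smul, norm_smul, real_inner_smul_left, real_inner_smul_right]
    simp [Real.norm_eq_abs, mul_pow, sq_abs]
    ring
  have h2' : ‖a - b‖ ^ 2 = ‖a‖ ^ 2 - 2 * inner ℝ a b + ‖b‖ ^ 2 := norm_sub_sq_real a b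
  have h3' : ‖lam • (a - b)‖ ^ 2 = lam ^ 2 * ‖a - b‖ ^ 2 := by
    rw [norm_smul, mul_pow, Real.norm_eq_abs, sq_abs]
  rw [h1', h3']
  have hB : ‖b‖ ^ 2 ≤ ‖a‖ ^ 2 := by
    apply pow_le_pow_left₀ (norm_nonneg _) hb
  have hdiv : (1 - lam) / lam * (lam ^ 2 * ‖a - b‖ ^ 2) = (1 - lam) * lam * ‖a - b‖ ^ 2 := by
    field_simp
  rw [hdiv, h2']
  nlinarith [norm_nonneg a, norm_nonneg b]
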